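/- arXiv:1601.02792 — 2 statements merged into one kernel-verified Lean document; each statement's English description precedes it below -/
import Mathlib

section
/- Let R ⊆ [n] × P with parts R_1, …, R_n. The multidegree R occurs in the first (n-)linear strand of the resolution of L(n,P), i.e. β_{|R|−n,R}(L(n,P)) ≠ 0, if and only if for every i = 1, …, n−1 and every pair of elements p ∈ R_i and q ∈ R_{i+1} one has p ≤ q in P. In that case β_{|R|−n,R}(L(n,P)) = 1. -/
/-!
Common infrastructure: abstract simplicial complexes, geometric realization,
homotopy equivalence, reduced simplicial cohomology, squarefree monomial ideals
(encoded as upward closed families of finite sets), Koszul-complex multigraded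
Betti numbers, and letterplace ideals of posets.
-/

noncomputable section

open Finset

attribute [local instance] Classical.propDecidable

universe u v w

/-- An abstract simplicial complex on the vertex type `V`: a collection of
finite subsets of `V` (the faces) closed under taking subsets. -/
structure SComplex (V : Type u) where
  faces : Set (Finset V)
  down_closed : ∀ {F G : Finset V}, F ∈ faces → G ⊆ F → G ∈ faces

namespace SComplex

/-- The geometric realization of a simplicial complex: the subspace of `V → ℝ`
consisting of the convex weight functions supported on a face. -/
def realization {V : Type u} [Fintype V] (X : SComplex V) : Set (V → ℝ) :=
  {f | (∀ v, 0 ≤ f v) ∧ (∑ v, f v) = 1 ∧ ∃ F ∈ X.faces, ∀ v, f v ≠ 0 → v ∈ F}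

/-- Two simplicial complexes are homotopy equivalent if their geometric
realizations are homotopy equivalent topological spaces. -/
def HEquiv {V : Type u} {W : Type v} [Fintype V] [Fintype W]
    (X : SComplex V) (Y : SComplex W) : Prop :=
  Nonempty (ContinuousMap.HomotopyEquiv X.realization Y.realization)

/-- Isomorphism ("equality up to relabeling of vertices") of simplicial
complexes: an order isomorphism between the face posets. -/
def IsIsomorphic {V : Type u} {W : Type v} (X : SComplex V) (Y : SComplex W) : Prop :=
  Nonempty ({F : Finset V // F ∈ X.faces} ≃o {G : Finset W // G ∈ Y.faces})

/-- The induced subcomplex on a subset `S` of the vertex set. -/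
def restrict {V : Type u} (X : SComplex V) (S : Set V) : SComplex V where
  faces := {F | F ∈ X.faces ∧ ∀ v ∈ F, v ∈ S}
  down_closed := by
    intro F G hF hGF
    exact ⟨X.down_closed hF.1 hGF, fun v hv => hF.2 v (hGF hv)⟩

/-- The join of two simplicial complexes (on the disjoint union of the two
vertex types). -/
def join {V : Type u} {W : Type v} (X : SComplex V) (Y : SComplex W) :
    SComplex (V ⊕ W) where
  faces := {F | F.preimage Sum.inl Sum.inl_injective.injOn ∈ X.faces ∧
                F.preimage Sum.inr Sum.inr_injective.injOn ∈ Y.faces}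
  down_closed := by
    intro F G hF hGF
    constructor
    · exact X.down_closed hF.1 fun x hx => by
        simp only [Finset.mem_preimage] at hx ⊢
        exact hGF hx
    · exact Y.down_closed hF.2 fun x hx => by
        simp only [Finset.mem_preimage] at hx ⊢
        exact hGF hx

/-- The join of a finite family of simplicial complexes on pairwise disjoint
vertex types. -/
def bigJoin {ι : Type u} {V : ι → Type v} (X : ∀ i, SComplex (V i)) :
    SComplex (Σ i, V i) where
  faces := {F | ∀ i, F.preimage (Sigma.mk i) sigma_mk_injective.injOn ∈ (X i).faces}
  down_closed := by
    intro F G hF hGF i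
    exact (X i).down_closed (hF i) fun x hx => by
      simp only [Finset.mem_preimage] at hx ⊢
      exact hGF hx

/-- The simplicial complex consisting of two disjoint points. -/
def twoPoint : SComplex Bool where
  faces := {F | F.card ≤ 1}
  down_closed := by
    intro F G hF hGF
    exact le_trans (Finset.card_le_card hGF) hF

/-- The suspension of a simplicial complex: its join with two points. -/
def suspension {V : Type u} (X : SComplex V) : SComplex (V ⊕ Bool) :=
  join X twoPoint

/-- Vertex type of the `m`-fold iterated suspension. -/
def SuspType (V : Type u) : ℕ → Type u
  | 0 => V
  | m + 1 => SuspType V m ⊕ Bool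

/-- The `m`-fold iterated suspension of a simplicial complex. -/
def iterSusp {V : Type u} (X : SComplex V) : (m : ℕ) → SComplex (SuspType V m)
  | 0 => X
  | m + 1 => suspension (iterSusp X m)

end SComplex

/-- Position of `x` with respect to a finite set: the number of elements of `F`
preceding `x` in a fixed well-ordering of the vertex type.  Used for the signs
in (co)chain complexes. -/
def vpos {V : Type u} (F : Finset V) (x : V) : ℕ :=
  (F.filter fun w => WellOrderingRel w x).card

namespace SComplex

variable (k : Type w) [Field k]

/-- The faces of dimension `i` (i.e. of cardinality `i + 1`), `i ∈ ℤ`. -/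
abbrev Face {V : Type u} (X : SComplex V) (i : ℤ) : Type u :=
  {F : Finset V // F ∈ X.faces ∧ (F.card : ℤ) = i + 1}

/-- Reduced simplicial `i`-cochains of `X` with coefficients in `k`
(the empty face in dimension `-1` is included). -/
abbrev cochain {V : Type u} (X : SComplex V) (i : ℤ) : Type (max u w) :=
  Face X i → k

/-- Evaluation of a cochain on an arbitrary finite set (zero if the set is not
a face of the appropriate dimension). -/
def evalC {V : Type u} {X : SComplex V} {i : ℤ} (f : cochain k X i) (F : Finset V) : k :=
  if h : F ∈ X.faces ∧ (F.card : ℤ) = i + 1 then f ⟨F, h⟩ else 0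

theorem evalC_add {V : Type u} {X : SComplex V} {i : ℤ} (f g : cochain k X i)
    (F : Finset V) : evalC k (f + g) F = evalC k f F + evalC k g F := by
  unfold evalC
  split_ifs <;> simp

theorem evalC_smul {V : Type u} {X : SComplex V} {i : ℤ} (s : k) (f : cochain k X i)
    (F : Finset V) : evalC k (s • f) F = s * evalC k f F := by
  unfold evalC
  split_ifs <;> simp

/-- The simplicial coboundary map on reduced cochains. -/
def coboundary {V : Type u} (X : SComplex V) (i : ℤ) :
    cochain k X i →ₗ[k] cochain k X (i + 1) where
  toFun f F := ∑ v ∈ F.1, ((-1 : k) ^ vpos F.1 v) * evalC k f (F.1.erase v)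
  map_add' f g := by
    funext F
    show (∑ v ∈ F.1, ((-1 : k) ^ vpos F.1 v) * evalC k (f + g) (F.1.erase v))
      = (∑ v ∈ F.1, ((-1 : k) ^ vpos F.1 v) * evalC k f (F.1.erase v))
      + (∑ v ∈ F.1, ((-1 : k) ^ vpos F.1 v) * evalC k g (F.1.erase v))
    rw [← Finset.sum_add_distrib]
    exact Finset.sum_congr rfl fun v _ => by rw [evalC_add, mul_add]
  map_smul' s f := by
    funext F
    show (∑ v ∈ F.1, ((-1 : k) ^ vpos F.1 v) * evalC k (s • f) (F.1.erase v))
      = s * ∑ v ∈ F.1, ((-1 : k) ^ vpos F.1 v) * evalC k f (F.1.erase v)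
    rw [Finset.mul_sum]
    exact Finset.sum_congr rfl fun v _ => by rw [evalC_smul]; ring

/-- The dimension of the `i`-th reduced simplicial cohomology of `X` with
coefficients in the field `k` (computed as `dim ker d^i - dim im d^(i-1)`). -/
def redCohomDim {V : Type u} (X : SComplex V) (i : ℤ) : ℕ :=
  Module.finrank k (LinearMap.ker (coboundary k X i)) -
    Module.finrank k (LinearMap.range (coboundary k X (i - 1)))

/-- The generating series `t·H̃(X,t) = ∑_{i ≥ -1} t^{i+1} dim_k H̃^i(X;k)`,
an element of `ℕ⟦t⟧`. -/
def hSeries {V : Type u} (X : SComplex V) : PowerSeries ℕ :=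
  PowerSeries.mk fun m => redCohomDim k X ((m : ℤ) - 1)

end SComplex

/-- A squarefree monomial ideal on the set of variables `W`, encoded by the
upward closed family of the supports of the squarefree monomials belonging
to it. -/
structure SqfIdeal (W : Type u) where
  carrier : Set (Finset W)
  up_closed : ∀ {S T : Finset W}, S ∈ carrier → S ⊆ T → T ∈ carrier

namespace SqfIdeal

/-- The basis of the degree-`R` strand of the Koszul complex `K(x;I)` in
homological degree `i`. -/
abbrev KBasis {W : Type u} (I : SqfIdeal W) (R : Finset W) (i : ℤ) : Type u :=
  {S : Finset W // S ⊆ R ∧ (S.card : ℤ) = i ∧ R \ S ∈ I.carrier}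

/-- The degree-`R` strand of the Koszul complex of `I`, in homological
degree `i`, with coefficients in `k`. -/
abbrev kchain (k : Type w) [Field k] {W : Type u} (I : SqfIdeal W) (R : Finset W)
    (i : ℤ) : Type (max u w) :=
  KBasis I R i → k

variable (k : Type w) [Field k]

/-- Evaluation of a Koszul chain on an arbitrary finite set. -/
def evalK {W : Type u} {I : SqfIdeal W} {R : Finset W} {i : ℤ}
    (f : kchain k I R i) (S : Finset W) : k :=
  if h : S ⊆ R ∧ (S.card : ℤ) = i ∧ R \ S ∈ I.carrier then f ⟨S, h⟩ else 0

theorem evalK_add {W : Type u} {I : SqfIdeal W} {R : Finset W} {i : ℤ}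
    (f g : kchain k I R i) (S : Finset W) :
    evalK k (f + g) S = evalK k f S + evalK k g S := by
  unfold evalK
  split_ifs <;> simp

theorem evalK_smul {W : Type u} {I : SqfIdeal W} {R : Finset W} {i : ℤ}
    (s : k) (f : kchain k I R i) (S : Finset W) :
    evalK k (s • f) S = s * evalK k f S := by
  unfold evalK
  split_ifs <;> simp

/-- The Koszul differential on the degree-`R` strand (as a map of the dual
function spaces). -/
def koszulD {W : Type u} (I : SqfIdeal W) (R : Finset W) (i : ℤ) :
    kchain k I R i →ₗ[k] kchain k I R (i - 1) where
  toFun f S := ∑ v ∈ R \ S.1, ((-1 : k) ^ vpos S.1 v) * evalK k f (insert v S.1)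
  map_add' f g := by
    funext S
    show (∑ v ∈ R \ S.1, ((-1 : k) ^ vpos S.1 v) * evalK k (f + g) (insert v S.1))
      = (∑ v ∈ R \ S.1, ((-1 : k) ^ vpos S.1 v) * evalK k f (insert v S.1))
      + (∑ v ∈ R \ S.1, ((-1 : k) ^ vpos S.1 v) * evalK k g (insert v S.1))
    rw [← Finset.sum_add_distrib]
    exact Finset.sum_congr rfl fun v _ => by rw [evalK_add, mul_add]
  map_smul' s f := by
    funext S
    show (∑ v ∈ R \ S.1, ((-1 : k) ^ vpos S.1 v) * evalK k (s • f) (insert v S.1))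
      = s * ∑ v ∈ R \ S.1, ((-1 : k) ^ vpos S.1 v) * evalK k f (insert v S.1)
    rw [Finset.mul_sum]
    exact Finset.sum_congr rfl fun v _ => by rw [evalK_smul]; ring

end SqfIdeal

/-- The multigraded Betti number `β_{i,R}(I) = dim_k Tor_i(I,k)_R` of a
squarefree monomial ideal in the squarefree multidegree `R`, computed as the
dimension of the `i`-th homology of the degree-`R` strand of the Koszul
complex. -/
def multiBetti (k : Type w) [Field k] {W : Type u} (I : SqfIdeal W) (i : ℤ)
    (R : Finset W) : ℕ :=
  Module.finrank k (LinearMap.ker (SqfIdeal.koszulD k I R i)) -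
    Module.finrank k (LinearMap.range (SqfIdeal.koszulD k I R (i + 1)))

/-- The graded Betti number `β_{i,j}(I) = dim_k Tor_i(I,k)_j` of a squarefree
monomial ideal: the sum of the multigraded Betti numbers over the (squarefree)
multidegrees of cardinality `j`. -/
def gradedBetti (k : Type w) [Field k] {W : Type u} [Fintype W] (I : SqfIdeal W)
    (i : ℤ) (j : ℤ) : ℕ :=
  if 0 ≤ j then
    ∑ R ∈ Finset.powersetCard j.toNat (Finset.univ : Finset W), multiBetti k I i R
  else 0

/-- The `n`-th letterplace ideal `L(n,P)` of a poset `P`: the squarefree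
monomial ideal on the variables `x_{(i,p)}`, `(i,p) ∈ [n] × P`, generated by
the monomials `x_{(1,p₁)} ⋯ x_{(n,pₙ)}` with `p₁ ≤ p₂ ≤ ⋯ ≤ pₙ` in `P`. -/
def letterplace (n : ℕ) (P : Type u) [PartialOrder P] : SqfIdeal (Fin n × P) where
  carrier := {T | ∃ c : Fin n → P, Monotone c ∧ ∀ i, (i, c i) ∈ T}
  up_closed := by
    rintro S T ⟨c, hc, hm⟩ hST
    exact ⟨c, hc, fun i => hST (hm i)⟩

/-- The `i`-th part `R_i ⊆ P` of a multidegree `R ⊆ [n] × P`. -/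
def part {n : ℕ} {P : Type u} (R : Finset (Fin n × P)) (i : Fin n) : Finset P :=
  (R.filter fun q => q.1 = i).image Prod.snd

/-- The set of maximal elements of the induced subposet on `A`. -/
def maxSet {P : Type u} [PartialOrder P] (A : Finset P) : Finset P :=
  A.filter fun a => ∀ b ∈ A, a ≤ b → a = b

/-- The set of minimal elements of the induced subposet on `A`. -/
def minSet {P : Type u} [PartialOrder P] (A : Finset P) : Finset P :=
  A.filter fun a => ∀ b ∈ A, b ≤ a → a = b

/-- The transitive order `A ≤ B` on subsets of a poset: every maximal element
of `A` is below some minimal element of `B`, and every minimal element of `B`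
is above some maximal element of `A`. -/
def subsetLE {P : Type u} [PartialOrder P] (A B : Finset P) : Prop :=
  (∀ a ∈ maxSet A, ∃ b ∈ minSet B, a ≤ b) ∧
  (∀ b ∈ minSet B, ∃ a ∈ maxSet A, a ≤ b)

/-- The independence complex of the bipartite graph on two disjoint copies of
`P`, with left vertex set `A`, right vertex set `B`, and edges the pairs
`(p, q) ∈ A × B` with `p ≤ q` in `P`. -/
def XComplex {P : Type u} [PartialOrder P] (A B : Finset P) : SComplex (P ⊕ P) where
  faces := {F | (∀ x ∈ F, Sum.elim (· ∈ A) (· ∈ B) x) ∧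
                ∀ p q : P, Sum.inl p ∈ F → Sum.inr q ∈ F → ¬ p ≤ q}
  down_closed := by
    intro F G hF hGF
    exact ⟨fun x hx => hF.1 x (hGF hx), fun p q hp hq => hF.2 p q (hGF hp) (hGF hq)⟩

/-- `Y₁`: the simplicial complex on `A` whose faces are the subsets `F ⊆ A`
such that some `b ∈ B` dominates no element of `F`. -/
def Y1Complex {P : Type u} [PartialOrder P] (A B : Finset P) : SComplex P where
  faces := {F | (∀ x ∈ F, x ∈ A) ∧ ∃ b ∈ B, ∀ a ∈ F, ¬ a ≤ b}
  down_closed := by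
    rintro F G ⟨hFA, b, hb, hFb⟩ hGF
    exact ⟨fun x hx => hFA x (hGF hx), b, hb, fun a ha => hFb a (hGF ha)⟩

/-- `Y₂`: the simplicial complex on `B` whose faces are the subsets `F ⊆ B`
such that some `a ∈ A` is dominated by no element of `F`. -/
def Y2Complex {P : Type u} [PartialOrder P] (A B : Finset P) : SComplex P where
  faces := {F | (∀ x ∈ F, x ∈ B) ∧ ∃ a ∈ A, ∀ b ∈ F, ¬ a ≤ b}
  down_closed := by
    rintro F G ⟨hFB, a, ha, hFa⟩ hGF
    exact ⟨fun x hx => hFB x (hGF hx), a, ha, fun b hb => hFa b (hGF hb)⟩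

/-- The restriction `Δ(n,P)|_R` of the Stanley–Reisner complex of the
letterplace ideal `L(n,P)` to the vertex set `R`. -/
def deltaRes (n : ℕ) (P : Type u) [PartialOrder P] (R : Finset (Fin n × P)) :
    SComplex (Fin n × P) where
  faces := {F | F ⊆ R ∧ ¬ ∃ c : Fin n → P, Monotone c ∧ ∀ i, (i, c i) ∈ F}
  down_closed := by
    rintro F G ⟨hFR, hF⟩ hGF
    exact ⟨hGF.trans hFR, fun ⟨c, hc, hm⟩ => hF ⟨c, hc, fun i => hGF (hm i)⟩⟩

/-- `A` is a maximal antichain of the poset `P`. -/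
def IsMaxFinAntichain {P : Type u} [PartialOrder P] (A : Finset P) : Prop :=
  IsAntichain (· ≤ ·) (A : Set P) ∧
    ∀ B : Finset P, IsAntichain (· ≤ ·) (B : Set P) → A ⊆ B → A = B

/-- The maximal cardinality of an antichain in the finite poset `P`. -/
def maxAntichainCard (P : Type u) [PartialOrder P] [Fintype P] : ℕ :=
  Finset.sup (Finset.univ.filter fun A : Finset P => IsAntichain (· ≤ ·) (A : Set P))
    Finset.card

/-- The independence complex of a bipartite graph, with parts `A` and `B` and
edge relation `E`. -/
def bipIndep {A : Type u} {B : Type v} (E : A → B → Prop) : SComplex (A ⊕ B) where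
  faces := {F | ∀ a b, Sum.inl a ∈ F → Sum.inr b ∈ F → ¬ E a b}
  down_closed := by
    intro F G hF hGF a b ha hb
    exact hF a b (hGF ha) (hGF hb)

namespace S12

/-! ### Generic arithmetic and sign helpers -/

theorem aux_pos (n : ℕ) : 0 < n + 2 - (n + 1) := by omega

theorem card_arith1 {x y s n : ℕ} (h1 : (x : ℤ) = (y : ℤ) - (s : ℤ))
    (h2 : (s : ℤ) = (y : ℤ) - ((n : ℤ) + 1)) : x = n + 1 := by omega

theorem card_arith2 {x y s n : ℕ} (h1 : (x : ℤ) = (y : ℤ) - (s : ℤ))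
    (h2 : (s : ℤ) = (y : ℤ) - ((n : ℤ) + 1) - 1) : x = n + 2 := by omega

theorem card_arith_range {x y s n : ℕ} (h2 : n + 1 ≤ x)
    (h3 : (x : ℤ) = (y : ℤ) - (s : ℤ))
    (h4 : (s : ℤ) = (y : ℤ) - ((n : ℤ) + 1) + 1) : False := by omega

theorem odd_perm {a b c d : ℕ} (h : Odd (a + b + c + d)) : Odd (c + b + (d + a)) := by
  rw [Nat.odd_iff] at h ⊢
  omega

theorem z2_add_self : ∀ x : ZMod 2, x + x = 0 := by decide

theorem z2_one_one : (1 : ZMod 2) + 1 = 0 := by decide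

theorem odd_of_cast {N : ℕ} (h : (N : ZMod 2) = 1) : Odd N := by
  rw [Nat.odd_iff]
  rcases Nat.mod_two_eq_zero_or_one N with h0 | h1
  · exfalso
    have h2 : ((N % 2 : ℕ) : ZMod 2) = 1 := (ZMod.natCast_mod N 2).trans h
    rw [h0] at h2
    norm_num at h2
  · exact h1

def χ {β : Type v} (y x : β) : ZMod 2 := if WellOrderingRel y x then 1 else 0

theorem χ_self {β : Type v} (x : β) : χ x x = 0 :=
  if_neg (irrefl_of (r := WellOrderingRel) x)

theorem χ_total {β : Type v} {x y : β} (h : x ≠ y) : χ x y + χ y x = 1 := by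
  unfold χ
  rcases trichotomous_of WellOrderingRel x y with h1 | h1 | h1
  · rw [if_pos h1, if_neg fun h2 => irrefl_of (r := WellOrderingRel) x (_root_.trans h1 h2),
      add_zero]
  · exact absurd h1 h
  · rw [if_neg fun h2 => irrefl_of (r := WellOrderingRel) x (_root_.trans h2 h1),
      if_pos h1, zero_add]

theorem neg1_ne_zero {k : Type w} [Field k] : (-1 : k) ≠ 0 := by
  intro h
  exact one_ne_zero (neg_eq_zero.1 h)

theorem cross {k : Type w} [Field k] {u v x1 x2 y1 y2 : k}
    (h1 : u * x1 + v * x2 = 0) (h2 : u * y1 + v * y2 = 0)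
    (hu2 : u * u = 1) (hv2 : v * v = 1) : x2 * y2 = x1 * y1 := by
  have e1 : v * x2 = -(u * x1) := by linear_combination h1
  have e2 : v * y2 = -(u * y1) := by linear_combination h2
  calc x2 * y2 = (v * v) * (x2 * y2) := by rw [hv2, one_mul]
    _ = (v * x2) * (v * y2) := by ring
    _ = (-(u * x1)) * (-(u * y1)) := by rw [e1, e2]
    _ = (u * u) * (x1 * y1) := by ring
    _ = x1 * y1 := by rw [hu2, one_mul]

theorem pow_neg_one_sq {k : Type w} [Field k] (e : ℕ) :
    (-1 : k) ^ e * (-1 : k) ^ e = 1 := by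
  rw [← pow_add]
  exact Even.neg_one_pow ⟨e, rfl⟩

theorem neg_one_sum {k : Type w} [Field k] {e1 e2 : ℕ} (h : Odd (e1 + e2)) :
    (-1 : k) ^ e1 + (-1 : k) ^ e2 = 0 := by
  have h1 : (-1 : k) ^ e1 * (-1 : k) ^ e2 = -1 := by
    rw [← pow_add]
    exact h.neg_one_pow
  have h2 : (-1 : k) ^ e1 * ((-1 : k) ^ e1 + (-1 : k) ^ e2) = 0 := by
    calc (-1 : k) ^ e1 * ((-1 : k) ^ e1 + (-1 : k) ^ e2)
        = (-1 : k) ^ e1 * (-1 : k) ^ e1 + (-1 : k) ^ e1 * (-1 : k) ^ e2 := by ring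
      _ = 1 + (-1) := by rw [h1, pow_neg_one_sq]
      _ = 0 := by ring
  rcases mul_eq_zero.1 h2 with h3 | h3
  · exact absurd h3 (pow_ne_zero _ neg1_ne_zero)
  · exact h3

end S12

namespace S12

attribute [local instance 2000] Classical.propDecidable

open SqfIdeal

variable {P : Type u} [PartialOrder P] {n : ℕ}

/-! ### Chains -/

def chainSet (c : Fin (n + 1) → P) : Finset (Fin (n + 1) × P) :=
  Finset.image (fun l => (l, c l)) Finset.univ

theorem mem_chainSet {c : Fin (n + 1) → P} {x : Fin (n + 1) × P} :
    x ∈ chainSet c ↔ x.2 = c x.1 := by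
  constructor
  · intro hx
    obtain ⟨l, -, rfl⟩ := Finset.mem_image.1 hx
    rfl
  · intro hx
    exact Finset.mem_image.2 ⟨x.1, Finset.mem_univ _, (Prod.ext_iff.2 ⟨rfl, hx.symm⟩)⟩

theorem mk_mem_chainSet (c : Fin (n + 1) → P) (l : Fin (n + 1)) : (l, c l) ∈ chainSet c :=
  mem_chainSet.2 rfl

theorem chainSet_card (c : Fin (n + 1) → P) : (chainSet c).card = n + 1 := by
  rw [chainSet, Finset.card_image_of_injective _ (fun l l' h => congrArg Prod.fst h),
    Finset.card_univ, Fintype.card_fin]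

theorem chainSet_subset {R : Finset (Fin (n + 1) × P)} {c : Fin (n + 1) → P}
    (hcR : ∀ l, (l, c l) ∈ R) : chainSet c ⊆ R := by
  intro x hx
  have h2 := mem_chainSet.1 hx
  have h3 : x = (x.1, c x.1) := Prod.ext_iff.2 ⟨rfl, h2⟩
  rw [h3]
  exact hcR x.1

theorem chainSet_carrier {c : Fin (n + 1) → P} (hc : Monotone c) :
    chainSet c ∈ (letterplace (n + 1) P).carrier :=
  ⟨c, hc, mk_mem_chainSet c⟩

theorem chainSet_carrier_iff {c : Fin (n + 1) → P} :
    chainSet c ∈ (letterplace (n + 1) P).carrier ↔ Monotone c := by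
  constructor
  · rintro ⟨c', hc', hm⟩
    have hcc : c' = c := funext fun l => mem_chainSet.1 (hm l)
    rwa [← hcc]
  · exact chainSet_carrier

theorem carrier_struct {T : Finset (Fin (n + 1) × P)}
    (hT : T ∈ (letterplace (n + 1) P).carrier) (hcard : T.card = n + 1) :
    ∃ c : Fin (n + 1) → P, Monotone c ∧ T = chainSet c := by
  obtain ⟨c, hc, hm⟩ := hT
  have hsub : chainSet c ⊆ T := chainSet_subset hm
  exact ⟨c, hc, (Finset.eq_of_subset_of_card_le hsub
    (hcard.trans (chainSet_card c).symm).le).symm⟩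

theorem carrier_struct2 {T : Finset (Fin (n + 1) × P)}
    (hT : T ∈ (letterplace (n + 1) P).carrier) (hcard : T.card = n + 2) :
    ∃ c : Fin (n + 1) → P, Monotone c ∧ (∀ l, (l, c l) ∈ T) ∧
      ∃ m r, (m, r) ∈ T ∧ r ≠ c m ∧ T = insert (m, r) (chainSet c) := by
  obtain ⟨c, hc, hm⟩ := hT
  have hsub : chainSet c ⊆ T := chainSet_subset hm
  have hne : (T \ chainSet c).Nonempty := by
    rw [← Finset.card_pos, Finset.card_sdiff_of_subset hsub, hcard, chainSet_card]
    exact aux_pos n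
  obtain ⟨b, hb⟩ := hne
  rw [Finset.mem_sdiff] at hb
  have hbeta : ((b.1, b.2) : Fin (n + 1) × P) = b := rfl
  refine ⟨c, hc, hm, b.1, b.2, ?_, ?_, ?_⟩
  · rw [hbeta]; exact hb.1
  · intro h
    exact hb.2 (mem_chainSet.2 h)
  · have h1 : insert (b.1, b.2) (chainSet c) ⊆ T := by
      rw [Finset.insert_subset_iff, hbeta]
      exact ⟨hb.1, hsub⟩
    have h2 : (insert (b.1, b.2) (chainSet c)).card = n + 2 := by
      rw [Finset.card_insert_of_notMem (by rw [hbeta]; exact hb.2), chainSet_card]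
    exact (Finset.eq_of_subset_of_card_le h1 (hcard.trans h2.symm).le).symm

/-! ### Membership certificates -/

theorem chain_mem (R : Finset (Fin (n + 1) × P)) {c : Fin (n + 1) → P}
    (hc : Monotone c) (hcR : ∀ l, (l, c l) ∈ R) :
    R \ chainSet c ⊆ R ∧ (((R \ chainSet c).card : ℤ)) = (R.card : ℤ) - (n + 1) ∧
      R \ (R \ chainSet c) ∈ (letterplace (n + 1) P).carrier := by
  have hsub : chainSet c ⊆ R := chainSet_subset hcR
  have hcard : n + 1 ≤ R.card := by
    have h := Finset.card_le_card hsub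
    rwa [chainSet_card] at h
  refine ⟨Finset.sdiff_subset, ?_, ?_⟩
  · rw [Finset.card_sdiff_of_subset hsub, chainSet_card, Nat.cast_sub hcard]
    push_cast
    ring
  · rw [Finset.sdiff_sdiff_eq_self hsub]
    exact chainSet_carrier hc

theorem pair_mem (R : Finset (Fin (n + 1) × P)) {c : Fin (n + 1) → P}
    (hc : Monotone c) (hcR : ∀ l, (l, c l) ∈ R) {m : Fin (n + 1)} {r : P}
    (hrR : (m, r) ∈ R) (hner : r ≠ c m) :
    R \ insert (m, r) (chainSet c) ⊆ R ∧
      (((R \ insert (m, r) (chainSet c)).card : ℤ)) = ((R.card : ℤ) - (n + 1)) - 1 ∧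
      R \ (R \ insert (m, r) (chainSet c)) ∈ (letterplace (n + 1) P).carrier := by
  have hbT : (m, r) ∉ chainSet c := fun h => hner (mem_chainSet.1 h)
  have hsub : insert (m, r) (chainSet c) ⊆ R := by
    rw [Finset.insert_subset_iff]
    exact ⟨hrR, chainSet_subset hcR⟩
  have hcardU : (insert (m, r) (chainSet c)).card = n + 2 := by
    rw [Finset.card_insert_of_notMem hbT, chainSet_card]
  have hcard : n + 2 ≤ R.card := by
    have h := Finset.card_le_card hsub
    rwa [hcardU] at h
  refine ⟨Finset.sdiff_subset, ?_, ?_⟩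
  · rw [Finset.card_sdiff_of_subset hsub, hcardU, Nat.cast_sub hcard]
    push_cast
    ring
  · rw [Finset.sdiff_sdiff_eq_self hsub]
    exact ⟨c, hc, fun l => Finset.mem_insert_of_mem (mk_mem_chainSet c l)⟩

theorem mem_part {R : Finset (Fin (n + 1) × P)} {j : Fin (n + 1)} {p : P} :
    p ∈ part R j ↔ (j, p) ∈ R := by
  unfold part
  simp only [Finset.mem_image, Finset.mem_filter]
  constructor
  · rintro ⟨⟨j', p'⟩, ⟨hR, h1⟩, h2⟩
    dsimp at h1 h2
    subst h1
    subst h2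
    exact hR
  · intro h
    exact ⟨(j, p), ⟨h, rfl⟩, rfl⟩

theorem all_mono {R : Finset (Fin (n + 1) × P)}
    (hgood : ∀ i : Fin n, ∀ p ∈ part R i.castSucc, ∀ q ∈ part R i.succ, p ≤ q)
    {c : Fin (n + 1) → P} (hcR : ∀ l, (l, c l) ∈ R) : Monotone c :=
  Fin.monotone_iff_le_succ.2 fun i =>
    hgood i _ (mem_part.2 (hcR _)) _ (mem_part.2 (hcR _))

def upd (c : Fin (n + 1) → P) (m : Fin (n + 1)) (r : P) : Fin (n + 1) → P :=
  fun l => if l = m then r else c l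

theorem upd_same (c : Fin (n + 1) → P) (m : Fin (n + 1)) (r : P) : upd c m r m = r :=
  if_pos rfl

theorem upd_noteq {c : Fin (n + 1) → P} {m : Fin (n + 1)} {r : P} {l : Fin (n + 1)}
    (h : l ≠ m) : upd c m r l = c l := if_neg h

theorem update_mem {R : Finset (Fin (n + 1) × P)} {c : Fin (n + 1) → P}
    (hcR : ∀ l, (l, c l) ∈ R) {m : Fin (n + 1)} {r : P} (hrR : (m, r) ∈ R) :
    ∀ l, (l, upd c m r l) ∈ R := by
  intro l
  by_cases hl : l = m
  · subst hl
    rw [upd_same]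
    exact hrR
  · rw [upd_noteq hl]
    exact hcR l

/-! ### Finset helpers -/

theorem sdiff_insert_sdiff {β : Type v} [DecidableEq β] {R U : Finset β} (hU : U ⊆ R)
    {v : β} (hv : v ∈ U) : R \ insert v (R \ U) = U.erase v := by
  ext x
  simp only [Finset.mem_sdiff, Finset.mem_insert, Finset.mem_erase]
  constructor
  · rintro ⟨hxR, h⟩
    refine ⟨fun hxv => h (Or.inl hxv), ?_⟩
    by_contra hxU
    exact h (Or.inr ⟨hxR, hxU⟩)
  · rintro ⟨hxv, hxU⟩
    exact ⟨hU hxU, fun h => h.elim hxv fun h2 => h2.2 hxU⟩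

theorem insert_sdiff_eq {β : Type v} [DecidableEq β] {R T : Finset β} {b : β}
    (hbR : b ∈ R) (hbT : b ∉ T) : insert b (R \ insert b T) = R \ T := by
  ext x
  simp only [Finset.mem_insert, Finset.mem_sdiff, Finset.mem_insert]
  constructor
  · rintro (rfl | ⟨hxR, hx⟩)
    · exact ⟨hbR, hbT⟩
    · exact ⟨hxR, fun hxT => hx (Or.inr hxT)⟩
  · rintro ⟨hxR, hxT⟩
    by_cases hxb : x = b
    · exact Or.inl hxb
    · exact Or.inr ⟨hxR, fun h => h.elim hxb hxT⟩

theorem chainSet_update (c : Fin (n + 1) → P) (m : Fin (n + 1)) (r : P) :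
    chainSet (upd c m r) = insert (m, r) ((chainSet c).erase (m, c m)) := by
  ext x
  rw [mem_chainSet, Finset.mem_insert, Finset.mem_erase, mem_chainSet]
  by_cases hl : x.1 = m
  · constructor
    · intro h
      left
      rw [hl, upd_same] at h
      exact Prod.ext_iff.2 ⟨hl, h⟩
    · rintro (rfl | ⟨hne, h⟩)
      · show ((m, r) : Fin (n + 1) × P).2 = upd c m r ((m, r) : Fin (n + 1) × P).1
        exact (upd_same c m r).symm
      · rw [hl] at h
        exact absurd (Prod.ext_iff.2 ⟨hl, h⟩ : x = (m, c m)) hne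
  · rw [upd_noteq hl]
    constructor
    · intro h
      exact Or.inr ⟨fun he => hl (congrArg Prod.fst he), h⟩
    · rintro (rfl | ⟨-, h⟩)
      · exact absurd rfl hl
      · exact h

theorem erase_not_carrier {c : Fin (n + 1) → P} {m : Fin (n + 1)} {r : P}
    (hner : r ≠ c m) {v : Fin (n + 1) × P} (hvT : v ∈ chainSet c) (hvm : v.1 ≠ m) :
    (insert (m, r) (chainSet c)).erase v ∉ (letterplace (n + 1) P).carrier := by
  rintro ⟨c', hc', hm'⟩
  have h := hm' v.1
  rw [Finset.mem_erase] at h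
  obtain ⟨hnev, hmem⟩ := h
  rcases Finset.mem_insert.1 hmem with h1 | h2
  · exact hvm (congrArg Prod.fst h1)
  · rw [mem_chainSet] at h2
    apply hnev
    have hv2 : v.2 = c v.1 := mem_chainSet.1 hvT
    exact Prod.ext_iff.2 ⟨rfl, h2.trans hv2.symm⟩

theorem insert_a_eq {R : Finset (Fin (n + 1) × P)} {c : Fin (n + 1) → P}
    (hcR : ∀ l, (l, c l) ∈ R) {m : Fin (n + 1)} {r : P} (hner : r ≠ c m) :
    insert (m, c m) (R \ insert (m, r) (chainSet c))
      = R \ chainSet (upd c m r) := by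
  have hab : ((m, c m) : Fin (n + 1) × P) ≠ (m, r) := fun h =>
    hner ((Prod.ext_iff.1 h).2).symm
  have h1 : insert (m, r) (chainSet c)
      = insert (m, c m) (chainSet (upd c m r)) := by
    rw [chainSet_update, Finset.insert_comm, Finset.insert_erase (mk_mem_chainSet c m)]
  have hanotin : (m, c m) ∉ chainSet (upd c m r) := by
    rw [chainSet_update, Finset.mem_insert]
    rintro (h | h)
    · exact hab h
    · exact Finset.notMem_erase _ _ h
  rw [h1]
  exact insert_sdiff_eq (hcR m) hanotin

end S12

namespace S12

attribute [local instance 2000] Classical.propDecidable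

variable {P : Type u} [PartialOrder P] {n : ℕ}

/-! ### The master two-term formula -/

theorem master {k : Type w} [Field k] (R : Finset (Fin (n + 1) × P)) {c : Fin (n + 1) → P}
    (hc : Monotone c) (hcR : ∀ l, (l, c l) ∈ R) {m : Fin (n + 1)} {r : P}
    (hrR : (m, r) ∈ R) (hner : r ≠ c m)
    (g : SqfIdeal.kchain k (letterplace (n + 1) P) R ((R.card : ℤ) - (n + 1))) :
    SqfIdeal.koszulD k (letterplace (n + 1) P) R ((R.card : ℤ) - (n + 1)) g
        ⟨R \ insert (m, r) (chainSet c), pair_mem R hc hcR hrR hner⟩ =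
      (-1 : k) ^ vpos (R \ insert (m, r) (chainSet c)) (m, c m) *
        (if h : Monotone (upd c m r) then
            g ⟨R \ chainSet (upd c m r), chain_mem R h (update_mem hcR hrR)⟩
          else 0) +
      (-1 : k) ^ vpos (R \ insert (m, r) (chainSet c)) (m, r) *
        g ⟨R \ chainSet c, chain_mem R hc hcR⟩ := by
  have hbT : (m, r) ∉ chainSet c := fun h => hner (mem_chainSet.1 h)
  have haT : (m, c m) ∈ chainSet c := mk_mem_chainSet c m
  have hab : ((m, c m) : Fin (n + 1) × P) ≠ (m, r) := fun h =>
    hner ((Prod.ext_iff.1 h).2).symm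
  have hUR : insert (m, r) (chainSet c) ⊆ R := by
    rw [Finset.insert_subset_iff]
    exact ⟨hrR, chainSet_subset hcR⟩
  have hbI : (m, r) ∉ insert (m, c m) ((chainSet c).erase (m, c m)) := by
    rw [Finset.insert_erase haT]
    exact hbT
  have haI : (m, c m) ∉ (chainSet c).erase (m, c m) := Finset.notMem_erase _ _
  have hsum : SqfIdeal.koszulD k (letterplace (n + 1) P) R ((R.card : ℤ) - (n + 1)) g
        ⟨R \ insert (m, r) (chainSet c), pair_mem R hc hcR hrR hner⟩
      = ∑ v ∈ R \ (R \ insert (m, r) (chainSet c)),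
          (-1 : k) ^ vpos (R \ insert (m, r) (chainSet c)) v *
            SqfIdeal.evalK k g (insert v (R \ insert (m, r) (chainSet c))) := rfl
  rw [hsum]
  rw [show R \ (R \ insert (m, r) (chainSet c))
      = insert (m, r) (insert (m, c m) ((chainSet c).erase (m, c m))) by
    rw [Finset.sdiff_sdiff_eq_self hUR, Finset.insert_erase haT]]
  rw [Finset.sum_insert hbI, Finset.sum_insert haI]
  have hzero : ∀ v ∈ (chainSet c).erase (m, c m),
      (-1 : k) ^ vpos (R \ insert (m, r) (chainSet c)) v *
        SqfIdeal.evalK k g (insert v (R \ insert (m, r) (chainSet c))) = 0 := by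
    intro v hv
    have hvT : v ∈ chainSet c := Finset.mem_of_mem_erase hv
    have hva : v ≠ (m, c m) := Finset.ne_of_mem_erase hv
    have hvm : v.1 ≠ m := by
      intro h
      apply hva
      have h2 : v.2 = c v.1 := mem_chainSet.1 hvT
      rw [← h]
      exact Prod.ext_iff.2 ⟨rfl, h2⟩
    have hvU : v ∈ insert (m, r) (chainSet c) := Finset.mem_insert_of_mem hvT
    have hcomp : R \ insert v (R \ insert (m, r) (chainSet c))
        = (insert (m, r) (chainSet c)).erase v := sdiff_insert_sdiff hUR hvU
    have hek : SqfIdeal.evalK k g (insert v (R \ insert (m, r) (chainSet c))) = 0 := by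
      unfold SqfIdeal.evalK
      apply dif_neg
      intro hcond
      exact erase_not_carrier hner hvT hvm (hcomp ▸ hcond.2.2)
    rw [hek, mul_zero]
  rw [Finset.sum_eq_zero hzero, add_zero]
  have hXb : insert (m, r) (R \ insert (m, r) (chainSet c)) = R \ chainSet c :=
    insert_sdiff_eq hrR hbT
  have hXa : insert (m, c m) (R \ insert (m, r) (chainSet c))
      = R \ chainSet (upd c m r) := insert_a_eq hcR hner
  rw [hXb, hXa]
  have e1 : SqfIdeal.evalK k g (R \ chainSet c)
      = g ⟨R \ chainSet c, chain_mem R hc hcR⟩ := by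
    unfold SqfIdeal.evalK
    exact dif_pos (chain_mem R hc hcR)
  have e2 : SqfIdeal.evalK k g (R \ chainSet (upd c m r)) =
      (if h : Monotone (upd c m r) then
          g ⟨R \ chainSet (upd c m r), chain_mem R h (update_mem hcR hrR)⟩
        else 0) := by
    by_cases h : Monotone (upd c m r)
    · rw [dif_pos h]
      unfold SqfIdeal.evalK
      exact dif_pos (chain_mem R h (update_mem hcR hrR))
    · rw [dif_neg h]
      unfold SqfIdeal.evalK
      apply dif_neg
      intro hcond
      apply h
      rw [← chainSet_carrier_iff]
      have hsub2 : chainSet (upd c m r) ⊆ R :=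
        chainSet_subset (update_mem hcR hrR)
      have h3 := hcond.2.2
      rwa [Finset.sdiff_sdiff_eq_self hsub2] at h3
  rw [e1, e2]
  ring

end S12

namespace S12

attribute [local instance 2000] Classical.propDecidable

variable {P : Type u} [PartialOrder P] {n : ℕ}

/-! ### Signs -/

theorem vpos_cast {β : Type v} (F : Finset β) (x : β) :
    ((vpos F x : ℕ) : ZMod 2) = ∑ y ∈ F, χ y x := by
  unfold vpos χ
  rw [Finset.card_filter, Nat.cast_sum]
  exact Finset.sum_congr rfl fun y _ => by split_ifs <;> simp

theorem vpos_union {β : Type v} [DecidableEq β] {s t : Finset β} (h : Disjoint s t) (x : β) :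
    vpos (s ∪ t) x = vpos s x + vpos t x := by
  unfold vpos
  rw [Finset.filter_union, Finset.card_union_of_disjoint (Finset.disjoint_filter_filter h)]

def ρ (x y : Fin (n + 1) × P) : ZMod 2 :=
  if x.1 < y.1 ∧ WellOrderingRel y x then 1 else 0

def invCount (T : Finset (Fin (n + 1) × P)) : ℕ :=
  ((T ×ˢ T).filter fun z => z.1.1 < z.2.1 ∧ WellOrderingRel z.2 z.1).card

def phi (R T : Finset (Fin (n + 1) × P)) : ℕ := (∑ x ∈ T, vpos R x) + invCount T

theorem invCount_cast (T : Finset (Fin (n + 1) × P)) :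
    ((invCount T : ℕ) : ZMod 2) = ∑ x ∈ T, ∑ y ∈ T, ρ x y := by
  unfold invCount ρ
  rw [Finset.card_filter, Nat.cast_sum, Finset.sum_product]
  exact Finset.sum_congr rfl fun x _ => Finset.sum_congr rfl fun y _ => by
    dsimp only
    split_ifs <;> simp

theorem ρ_self (x : Fin (n + 1) × P) : ρ x x = 0 := by
  unfold ρ
  rw [if_neg]
  rintro ⟨h1, -⟩
  exact lt_irrefl _ h1

theorem inv_insert (x : Fin (n + 1) × P) (C : Finset (Fin (n + 1) × P)) (hx : x ∉ C) :
    ((invCount (insert x C) : ℕ) : ZMod 2)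
      = (∑ y ∈ C, ρ x y) + (∑ y ∈ C, ρ y x) + ∑ p ∈ C, ∑ q ∈ C, ρ p q := by
  rw [invCount_cast, Finset.sum_insert hx]
  rw [Finset.sum_insert hx, ρ_self, zero_add]
  rw [Finset.sum_congr rfl fun p (_ : p ∈ C) => Finset.sum_insert hx (f := fun y => ρ p y)]
  rw [Finset.sum_add_distrib]
  ring

theorem cell_zero {c : Fin (n + 1) → P} {m : Fin (n + 1)} {r : P}
    {y : Fin (n + 1) × P} (hyT : y ∈ chainSet c) (hya : y ≠ (m, c m)) (hyb : y ≠ (m, r)) :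
    χ y (m, c m) + χ y (m, r) + ρ (m, c m) y + ρ y (m, c m) + ρ (m, r) y + ρ y (m, r)
      = 0 := by
  have hym : y.1 ≠ m := by
    intro h
    apply hya
    have h2 : y.2 = c y.1 := mem_chainSet.1 hyT
    rw [← h]
    exact Prod.ext_iff.2 ⟨rfl, h2⟩
  rcases lt_trichotomy y.1 m with hlt | heq | hgt
  · have h1 : ρ (m, c m) y = 0 := by
      unfold ρ
      rw [if_neg]
      rintro ⟨h2, -⟩
      exact lt_asymm hlt h2
    have h2 : ρ (m, r) y = 0 := by
      unfold ρ
      rw [if_neg]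
      rintro ⟨h2, -⟩
      exact lt_asymm hlt h2
    have h3 : ρ y (m, c m) = χ (m, c m) y := by
      unfold ρ χ
      rw [if_congr (and_iff_right (show y.1 < ((m, c m) : Fin (n + 1) × P).1 from hlt))
        rfl rfl]
    have h4 : ρ y (m, r) = χ (m, r) y := by
      unfold ρ χ
      rw [if_congr (and_iff_right (show y.1 < ((m, r) : Fin (n + 1) × P).1 from hlt))
        rfl rfl]
    rw [h1, h2, h3, h4]
    have t1 : χ y (m, c m) + χ (m, c m) y = 1 := χ_total hya
    have t2 : χ y (m, r) + χ (m, r) y = 1 := χ_total hyb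
    calc χ y (m, c m) + χ y (m, r) + 0 + χ (m, c m) y + 0 + χ (m, r) y
        = (χ y (m, c m) + χ (m, c m) y) + (χ y (m, r) + χ (m, r) y) := by ring
      _ = 1 + 1 := by rw [t1, t2]
      _ = 0 := z2_one_one
  · exact absurd heq hym
  · have h1 : ρ y (m, c m) = 0 := by
      unfold ρ
      rw [if_neg]
      rintro ⟨h2, -⟩
      exact lt_asymm hgt h2
    have h2 : ρ y (m, r) = 0 := by
      unfold ρ
      rw [if_neg]
      rintro ⟨h2, -⟩
      exact lt_asymm hgt h2
    have h3 : ρ (m, c m) y = χ y (m, c m) := by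
      unfold ρ χ
      rw [if_congr (and_iff_right (show ((m, c m) : Fin (n + 1) × P).1 < y.1 from hgt))
        rfl rfl]
    have h4 : ρ (m, r) y = χ y (m, r) := by
      unfold ρ χ
      rw [if_congr (and_iff_right (show ((m, r) : Fin (n + 1) × P).1 < y.1 from hgt))
        rfl rfl]
    rw [h1, h2, h3, h4]
    calc χ y (m, c m) + χ y (m, r) + χ y (m, c m) + 0 + χ y (m, r) + 0
        = (χ y (m, c m) + χ y (m, c m)) + (χ y (m, r) + χ y (m, r)) := by ring
      _ = 0 + 0 := by rw [z2_add_self, z2_add_self]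
      _ = 0 := by rw [add_zero]

theorem sign_parity (R : Finset (Fin (n + 1) × P)) {c : Fin (n + 1) → P}
    (hcR : ∀ l, (l, c l) ∈ R) {m : Fin (n + 1)} {r : P}
    (hrR : (m, r) ∈ R) (hner : r ≠ c m) :
    Odd (phi R (chainSet c) + phi R (chainSet (upd c m r))
      + vpos (R \ insert (m, r) (chainSet c)) (m, c m)
      + vpos (R \ insert (m, r) (chainSet c)) (m, r)) := by
  apply odd_of_cast
  have haT : (m, c m) ∈ chainSet c := mk_mem_chainSet c m
  have hbT : (m, r) ∉ chainSet c := fun h => hner (mem_chainSet.1 h)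
  have hab : ((m, c m) : Fin (n + 1) × P) ≠ (m, r) := fun h =>
    hner ((Prod.ext_iff.1 h).2).symm
  have haC : (m, c m) ∉ (chainSet c).erase (m, c m) := Finset.notMem_erase _ _
  have hbC : (m, r) ∉ (chainSet c).erase (m, c m) := fun h =>
    hbT (Finset.mem_of_mem_erase h)
  have hTC : chainSet c = insert (m, c m) ((chainSet c).erase (m, c m)) :=
    (Finset.insert_erase haT).symm
  have hTC' : chainSet (upd c m r)
      = insert (m, r) ((chainSet c).erase (m, c m)) := chainSet_update c m r
  have hUR : insert (m, r) (chainSet c) ⊆ R := by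
    rw [Finset.insert_subset_iff]
    exact ⟨hrR, chainSet_subset hcR⟩
  -- abbreviations
  set C := (chainSet c).erase (m, c m)
  set U := insert (m, r) (chainSet c) with hU
  -- the two phis
  have E0 : ∀ (x : Fin (n + 1) × P), x ∉ C →
      ((phi R (insert x C) : ℕ) : ZMod 2)
        = ((vpos R x : ℕ) : ZMod 2) + (∑ z ∈ C, ((vpos R z : ℕ) : ZMod 2))
          + ((invCount (insert x C) : ℕ) : ZMod 2) := by
    intro x hx
    unfold phi
    push_cast
    rw [Finset.sum_insert hx]
    try push_cast
    try ring
  have E1 := E0 (m, c m) haC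
  have E2 := E0 (m, r) hbC
  have E34 : ∀ z : Fin (n + 1) × P,
      ((vpos R z : ℕ) : ZMod 2)
        = ((vpos (R \ U) z : ℕ) : ZMod 2) + ((vpos U z : ℕ) : ZMod 2) := by
    intro z
    have h := vpos_union (s := R \ U) (t := U) Finset.sdiff_disjoint z
    rw [Finset.sdiff_union_of_subset hUR] at h
    rw [h, Nat.cast_add]
  have E3 := E34 (m, c m)
  have E4 := E34 (m, r)
  have hUit : U = insert (m, r) (insert (m, c m) C) := by rw [hU, hTC]
  have E5 : ((vpos U (m, c m) : ℕ) : ZMod 2)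
      = χ (m, r) (m, c m) + ∑ y ∈ C, χ y (m, c m) := by
    rw [vpos_cast, hUit, Finset.sum_insert (by rw [← hTC]; exact hbT),
      Finset.sum_insert haC, χ_self, zero_add]
  have E6 : ((vpos U (m, r) : ℕ) : ZMod 2)
      = χ (m, c m) (m, r) + ∑ y ∈ C, χ y (m, r) := by
    rw [vpos_cast, hUit, Finset.sum_insert (by rw [← hTC]; exact hbT),
      Finset.sum_insert haC]
    have h := χ_self ((m, r) : Fin (n + 1) × P)
    rw [h, zero_add]
  have E7 := inv_insert (m, c m) C haC
  have E8 := inv_insert (m, r) C hbC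
  have E9 : χ (m, c m) (m, r) + χ (m, r) (m, c m) = 1 := χ_total hab
  have E10 : (∑ y ∈ C, χ y (m, c m)) + (∑ y ∈ C, χ y (m, r)) + (∑ y ∈ C, ρ (m, c m) y)
      + (∑ y ∈ C, ρ y (m, c m)) + (∑ y ∈ C, ρ (m, r) y) + (∑ y ∈ C, ρ y (m, r)) = 0 := by
    have hcell : ∀ y ∈ C,
        χ y (m, c m) + χ y (m, r) + ρ (m, c m) y + ρ y (m, c m) + ρ (m, r) y + ρ y (m, r)
          = 0 := by
      intro y hy
      exact cell_zero (Finset.mem_of_mem_erase hy) (Finset.ne_of_mem_erase hy)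
        (fun h => hbC (h ▸ hy))
    have h := Finset.sum_eq_zero hcell
    rw [Finset.sum_add_distrib, Finset.sum_add_distrib, Finset.sum_add_distrib,
      Finset.sum_add_distrib, Finset.sum_add_distrib] at h
    exact h
  -- assemble
  rw [hTC, hTC']
  push_cast
  linear_combination E1 + E2 + E3 + E4 + E5 + E6 + E7 + E8 + E9 + E10
    + z2_add_self ((vpos (R \ U) (m, c m) : ℕ) : ZMod 2)
    + z2_add_self ((vpos (R \ U) (m, r) : ℕ) : ZMod 2)
    + z2_add_self (∑ z ∈ C, ((vpos R z : ℕ) : ZMod 2))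
    + z2_add_self (∑ p ∈ C, ∑ q ∈ C, ρ p q)

end S12

namespace S12

attribute [local instance 2000] Classical.propDecidable

variable {P : Type u} [PartialOrder P] {n : ℕ}

/-! ### The sign vector and kernel computations -/

def eps (k : Type w) [Field k] (R : Finset (Fin (n + 1) × P)) :
    SqfIdeal.kchain k (letterplace (n + 1) P) R ((R.card : ℤ) - (n + 1)) :=
  fun S => (-1 : k) ^ phi R (R \ S.1)

theorem eps_apply (k : Type w) [Field k] (R : Finset (Fin (n + 1) × P))
    {c : Fin (n + 1) → P} (hc : Monotone c) (hcR : ∀ l, (l, c l) ∈ R) :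
    eps k R ⟨R \ chainSet c, chain_mem R hc hcR⟩ = (-1 : k) ^ phi R (chainSet c) := by
  unfold eps
  rw [Finset.sdiff_sdiff_eq_self (chainSet_subset hcR)]

theorem eps_ker (k : Type w) [Field k] (R : Finset (Fin (n + 1) × P))
    (hgood : ∀ i : Fin n, ∀ p ∈ part R i.castSucc, ∀ q ∈ part R i.succ, p ≤ q) :
    SqfIdeal.koszulD k (letterplace (n + 1) P) R ((R.card : ℤ) - (n + 1)) (eps k R) = 0 := by
  funext S'
  obtain ⟨S, hS⟩ := S'
  show SqfIdeal.koszulD k (letterplace (n + 1) P) R ((R.card : ℤ) - (n + 1)) (eps k R)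
    ⟨S, hS⟩ = 0
  have hcard : (R \ S).card = n + 2 := by
    have h1 : ((R \ S).card : ℤ) = (R.card : ℤ) - (S.card : ℤ) := by
      rw [Finset.card_sdiff_of_subset hS.1, Nat.cast_sub (Finset.card_le_card hS.1)]
    have h2 := hS.2.1
    exact card_arith2 h1 h2
  obtain ⟨c, hc0, hmT, m, r, hmrT, hner, hTeq⟩ := carrier_struct2 hS.2.2 hcard
  have hcR : ∀ l, (l, c l) ∈ R := fun l => Finset.sdiff_subset (hmT l)
  have hrR : (m, r) ∈ R := Finset.sdiff_subset hmrT
  have hc : Monotone c := all_mono hgood hcR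
  have hSeq : S = R \ insert (m, r) (chainSet c) := by
    rw [← hTeq, Finset.sdiff_sdiff_eq_self hS.1]
  have hidx : (⟨S, hS⟩ : SqfIdeal.KBasis (letterplace (n + 1) P) R
      (((R.card : ℤ) - (n + 1)) - 1))
      = ⟨R \ insert (m, r) (chainSet c), pair_mem R hc hcR hrR hner⟩ := Subtype.ext hSeq
  rw [hidx, master R hc hcR hrR hner (eps k R)]
  have hmono' : Monotone (upd c m r) := all_mono hgood (update_mem hcR hrR)
  rw [dif_pos hmono']
  rw [eps_apply k R hmono' (update_mem hcR hrR), eps_apply k R hc hcR]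
  rw [← pow_add, ← pow_add]
  exact neg_one_sum (odd_perm (sign_parity R hcR hrR hner))

theorem ker_rel {k : Type w} [Field k] {R : Finset (Fin (n + 1) × P)}
    {f : SqfIdeal.kchain k (letterplace (n + 1) P) R ((R.card : ℤ) - (n + 1))}
    (hf0 : SqfIdeal.koszulD k (letterplace (n + 1) P) R ((R.card : ℤ) - (n + 1)) f = 0)
    {c : Fin (n + 1) → P} (hc : Monotone c) (hcR : ∀ l, (l, c l) ∈ R)
    {m : Fin (n + 1)} {r : P} (hrR : (m, r) ∈ R) (hner : r ≠ c m) :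
    (-1 : k) ^ vpos (R \ insert (m, r) (chainSet c)) (m, c m) *
        (if h : Monotone (upd c m r) then
            f ⟨R \ chainSet (upd c m r), chain_mem R h (update_mem hcR hrR)⟩
          else 0) +
      (-1 : k) ^ vpos (R \ insert (m, r) (chainSet c)) (m, r) *
        f ⟨R \ chainSet c, chain_mem R hc hcR⟩ = 0 := by
  have h := master R hc hcR hrR hner f
  rw [← h, hf0]
  rfl

theorem vanish {k : Type w} [Field k] {R : Finset (Fin (n + 1) × P)}
    {f : SqfIdeal.kchain k (letterplace (n + 1) P) R ((R.card : ℤ) - (n + 1))}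
    (hf0 : SqfIdeal.koszulD k (letterplace (n + 1) P) R ((R.card : ℤ) - (n + 1)) f = 0)
    {c : Fin (n + 1) → P} (hc : Monotone c) (hcR : ∀ l, (l, c l) ∈ R)
    {m : Fin (n + 1)} {r : P} (hrR : (m, r) ∈ R) (hner : r ≠ c m)
    (hnm : ¬ Monotone (upd c m r)) :
    f ⟨R \ chainSet c, chain_mem R hc hcR⟩ = 0 := by
  have h := ker_rel hf0 hc hcR hrR hner
  rw [dif_neg hnm, mul_zero, zero_add] at h
  rcases mul_eq_zero.1 h with h1 | h1
  · exact absurd h1 (pow_ne_zero _ neg1_ne_zero)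
  · exact h1

theorem vanish_chain {k : Type w} [Field k] {R : Finset (Fin (n + 1) × P)}
    {f : SqfIdeal.kchain k (letterplace (n + 1) P) R ((R.card : ℤ) - (n + 1))}
    (hf0 : SqfIdeal.koszulD k (letterplace (n + 1) P) R ((R.card : ℤ) - (n + 1)) f = 0)
    {i : Fin n} {p q : P} (hp : (i.castSucc, p) ∈ R) (hq : (i.succ, q) ∈ R)
    (hpq : ¬ p ≤ q) {c : Fin (n + 1) → P} (hc : Monotone c)
    (hcR : ∀ l, (l, c l) ∈ R) :
    f ⟨R \ chainSet c, chain_mem R hc hcR⟩ = 0 := by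
  by_cases hq1 : q = c i.succ
  · have hpne : p ≠ c i.castSucc := fun h =>
      hpq (by rw [h, hq1]; exact hc (Fin.castSucc_lt_succ (i := i)).le)
    apply vanish hf0 hc hcR hp hpne
    intro hmon
    apply hpq
    have h2 := hmon (Fin.castSucc_lt_succ (i := i)).le
    rwa [upd_same, upd_noteq (Fin.castSucc_lt_succ (i := i)).ne',
      ← hq1] at h2
  · by_cases hmon : Monotone (upd c i.succ q)
    · have hc''R : ∀ l, (l, upd c i.succ q l) ∈ R := update_mem hcR hq
      have hzero : f ⟨R \ chainSet (upd c i.succ q),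
          chain_mem R hmon hc''R⟩ = 0 := by
        have hp2 : p ≠ upd c i.succ q i.castSucc := by
          rw [upd_noteq (Fin.castSucc_lt_succ (i := i)).ne]
          intro h
          apply hpq
          have h2 := hmon (Fin.castSucc_lt_succ (i := i)).le
          rw [upd_same, upd_noteq (Fin.castSucc_lt_succ (i := i)).ne]
            at h2
          rwa [← h] at h2
        apply vanish hf0 hmon hc''R hp hp2
        intro hmon2
        apply hpq
        have h2 := hmon2 (Fin.castSucc_lt_succ (i := i)).le
        rwa [upd_same, upd_noteq (Fin.castSucc_lt_succ (i := i)).ne',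
          upd_same] at h2
      have h := ker_rel hf0 hc hcR hq hq1
      rw [dif_pos hmon, hzero, mul_zero, zero_add] at h
      rcases mul_eq_zero.1 h with h1 | h1
      · exact absurd h1 (pow_ne_zero _ neg1_ne_zero)
      · exact h1
    · exact vanish hf0 hc hcR hq hq1 hmon

theorem ker_bot {k : Type w} [Field k] (R : Finset (Fin (n + 1) × P))
    (hbad : ¬ ∀ i : Fin n, ∀ p ∈ part R i.castSucc, ∀ q ∈ part R i.succ, p ≤ q) :
    LinearMap.ker (SqfIdeal.koszulD k (letterplace (n + 1) P) R
      ((R.card : ℤ) - (n + 1))) = ⊥ := by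
  push_neg at hbad
  obtain ⟨i, p, hp, q, hq, hpq⟩ := hbad
  rw [Submodule.eq_bot_iff]
  intro f hf
  have hf0 : SqfIdeal.koszulD k (letterplace (n + 1) P) R ((R.card : ℤ) - (n + 1)) f = 0 :=
    LinearMap.mem_ker.1 hf
  funext S'
  obtain ⟨S, hS⟩ := S'
  show f ⟨S, hS⟩ = 0
  have hcard : (R \ S).card = n + 1 := by
    have h1 : ((R \ S).card : ℤ) = (R.card : ℤ) - (S.card : ℤ) := by
      rw [Finset.card_sdiff_of_subset hS.1, Nat.cast_sub (Finset.card_le_card hS.1)]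
    have h2 := hS.2.1
    exact card_arith1 h1 h2
  obtain ⟨c, hcm, hTeq⟩ := carrier_struct hS.2.2 hcard
  have hcR : ∀ l, (l, c l) ∈ R := by
    intro l
    have h := mk_mem_chainSet c l
    rw [← hTeq] at h
    exact Finset.sdiff_subset h
  have hidx : (⟨S, hS⟩ : SqfIdeal.KBasis (letterplace (n + 1) P) R
      ((R.card : ℤ) - (n + 1)))
      = ⟨R \ chainSet c, chain_mem R hcm hcR⟩ :=
    Subtype.ext (show S = R \ chainSet c by rw [← hTeq, Finset.sdiff_sdiff_eq_self hS.1])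
  rw [hidx]
  exact vanish_chain hf0 (mem_part.1 hp) (mem_part.1 hq) hpq hcm hcR

end S12

namespace S12

attribute [local instance 2000] Classical.propDecidable

variable {P : Type u} [PartialOrder P] {n : ℕ}

theorem ker_span (k : Type w) [Field k] (R : Finset (Fin (n + 1) × P))
    (hne : ∀ i, (part R i).Nonempty)
    (hgood : ∀ i : Fin n, ∀ p ∈ part R i.castSucc, ∀ q ∈ part R i.succ, p ≤ q) :
    LinearMap.ker (SqfIdeal.koszulD k (letterplace (n + 1) P) R
      ((R.card : ℤ) - (n + 1))) = Submodule.span k {eps k R} := by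
  obtain ⟨c₀, hc₀⟩ : ∃ c₀ : Fin (n + 1) → P, ∀ l, c₀ l ∈ part R l :=
    ⟨fun l => (hne l).choose, fun l => (hne l).choose_spec⟩
  have hc₀R : ∀ l, (l, c₀ l) ∈ R := fun l => mem_part.1 (hc₀ l)
  apply le_antisymm
  · intro f hf
    have hf0 : SqfIdeal.koszulD k (letterplace (n + 1) P) R ((R.card : ℤ) - (n + 1)) f
        = 0 := LinearMap.mem_ker.1 hf
    have heps0 := eps_ker k R hgood
    have key : ∀ d (c : Fin (n + 1) → P) (hcR : ∀ l, (l, c l) ∈ R),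
        (Finset.univ.filter fun l => c l ≠ c₀ l).card = d →
        f ⟨R \ chainSet c, chain_mem R (all_mono hgood hcR) hcR⟩ *
          eps k R ⟨R \ chainSet c, chain_mem R (all_mono hgood hcR) hcR⟩ =
        f ⟨R \ chainSet c₀, chain_mem R (all_mono hgood hc₀R) hc₀R⟩ *
          eps k R ⟨R \ chainSet c₀, chain_mem R (all_mono hgood hc₀R) hc₀R⟩ := by
      intro d
      induction d with
      | zero =>
        intro c hcR h0
        have hcc : c = c₀ := by
          funext l
          by_contra hl
          have hmem : l ∈ Finset.univ.filter fun l => c l ≠ c₀ l :=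
            Finset.mem_filter.2 ⟨Finset.mem_univ _, hl⟩
          rw [Finset.card_eq_zero.1 h0] at hmem
          exact absurd hmem (Finset.notMem_empty l)
        subst hcc
        rfl
      | succ d ih =>
        intro c hcR hd
        have hex : ∃ l, c l ≠ c₀ l := by
          by_contra hno
          push_neg at hno
          have hemp : (Finset.univ.filter fun l => c l ≠ c₀ l) = ∅ :=
            Finset.filter_eq_empty_iff.2 fun l _ => fun h => h (hno l)
          rw [hemp, Finset.card_empty] at hd
          exact (Nat.succ_ne_zero d) hd.symm
        obtain ⟨l, hl⟩ := hex
        have hrR : (l, c₀ l) ∈ R := hc₀R l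
        have hner : c₀ l ≠ c l := Ne.symm hl
        have hc'R : ∀ j, (j, upd c l (c₀ l) j) ∈ R := update_mem hcR hrR
        have hmono : Monotone c := all_mono hgood hcR
        have hmono' : Monotone (upd c l (c₀ l)) := all_mono hgood hc'R
        have hfilter : (Finset.univ.filter fun j => upd c l (c₀ l) j ≠ c₀ j)
            = (Finset.univ.filter fun j => c j ≠ c₀ j).erase l := by
          ext j
          simp only [Finset.mem_filter, Finset.mem_erase, Finset.mem_univ, true_and]
          by_cases hj : j = l
          · subst hj
            rw [upd_same]
            simp
          · rw [upd_noteq hj]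
            constructor
            · intro h
              exact ⟨hj, h⟩
            · exact And.right
        have hmem0 : l ∈ Finset.univ.filter fun j => c j ≠ c₀ j :=
          Finset.mem_filter.2 ⟨Finset.mem_univ l, hl⟩
        have hcard' : (Finset.univ.filter
            fun j => upd c l (c₀ l) j ≠ c₀ j).card = d := by
          rw [hfilter, Finset.card_erase_of_mem hmem0, hd]
          exact Nat.succ_sub_one d
        have h1 := ker_rel hf0 hmono hcR hrR hner
        have h2 := ker_rel heps0 hmono hcR hrR hner
        rw [dif_pos hmono'] at h1 h2
        have hstep := cross h1 h2 (pow_neg_one_sq _) (pow_neg_one_sq _)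
        exact hstep.trans (ih (upd c l (c₀ l)) hc'R hcard')
    rw [Submodule.mem_span_singleton]
    refine ⟨f ⟨R \ chainSet c₀, chain_mem R (all_mono hgood hc₀R) hc₀R⟩ *
      eps k R ⟨R \ chainSet c₀, chain_mem R (all_mono hgood hc₀R) hc₀R⟩, ?_⟩
    funext S'
    obtain ⟨S, hS⟩ := S'
    have hcard : (R \ S).card = n + 1 := by
      have h1 : ((R \ S).card : ℤ) = (R.card : ℤ) - (S.card : ℤ) := by
        rw [Finset.card_sdiff_of_subset hS.1, Nat.cast_sub (Finset.card_le_card hS.1)]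
      have h2 := hS.2.1
      exact card_arith1 h1 h2
    obtain ⟨c, hcm, hTeq⟩ := carrier_struct hS.2.2 hcard
    have hcR : ∀ j, (j, c j) ∈ R := by
      intro j
      have h := mk_mem_chainSet c j
      rw [← hTeq] at h
      exact Finset.sdiff_subset h
    have hidx : (⟨S, hS⟩ : SqfIdeal.KBasis (letterplace (n + 1) P) R
        ((R.card : ℤ) - (n + 1)))
        = ⟨R \ chainSet c, chain_mem R (all_mono hgood hcR) hcR⟩ :=
      Subtype.ext (show S = R \ chainSet c by rw [← hTeq, Finset.sdiff_sdiff_eq_self hS.1])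
    have hkey := key _ c hcR rfl
    have heps2 : eps k R ⟨R \ chainSet c, chain_mem R (all_mono hgood hcR) hcR⟩ *
        eps k R ⟨R \ chainSet c, chain_mem R (all_mono hgood hcR) hcR⟩ = 1 := by
      rw [eps_apply k R (all_mono hgood hcR) hcR]
      exact pow_neg_one_sq _
    rw [hidx, Pi.smul_apply, smul_eq_mul, ← hkey, mul_assoc, heps2, mul_one]
  · rw [Submodule.span_singleton_le_iff_mem]
    exact LinearMap.mem_ker.2 (eps_ker k R hgood)

theorem eps_ne (k : Type w) [Field k] (R : Finset (Fin (n + 1) × P))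
    (hne : ∀ i, (part R i).Nonempty)
    (hgood : ∀ i : Fin n, ∀ p ∈ part R i.castSucc, ∀ q ∈ part R i.succ, p ≤ q) :
    eps k R ≠ 0 := by
  intro h
  obtain ⟨c₀, hc₀⟩ : ∃ c₀ : Fin (n + 1) → P, ∀ l, c₀ l ∈ part R l :=
    ⟨fun l => (hne l).choose, fun l => (hne l).choose_spec⟩
  have hc₀R : ∀ l, (l, c₀ l) ∈ R := fun l => mem_part.1 (hc₀ l)
  have hmono := all_mono hgood hc₀R
  have h2 := congrFun h ⟨R \ chainSet c₀, chain_mem R hmono hc₀R⟩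
  rw [eps_apply k R hmono hc₀R] at h2
  exact pow_ne_zero _ (neg1_ne_zero (k := k)) h2

theorem range_finrank_zero (k : Type w) [Field k] (R : Finset (Fin (n + 1) × P)) :
    Module.finrank k (LinearMap.range (SqfIdeal.koszulD k (letterplace (n + 1) P) R
      (((R.card : ℤ) - (n + 1)) + 1))) = 0 := by
  have hempty : IsEmpty (SqfIdeal.KBasis (letterplace (n + 1) P) R
      (((R.card : ℤ) - (n + 1)) + 1)) := by
    constructor
    rintro ⟨S, hsub, hcard, hcar⟩
    obtain ⟨c, hcm, hm⟩ := hcar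
    have h1 : chainSet c ⊆ R \ S := chainSet_subset hm
    have h2 := Finset.card_le_card h1
    rw [chainSet_card] at h2
    have h3 : ((R \ S).card : ℤ) = (R.card : ℤ) - (S.card : ℤ) := by
      rw [Finset.card_sdiff_of_subset hsub, Nat.cast_sub (Finset.card_le_card hsub)]
    exact card_arith_range h2 h3 hcard
  have hzero : SqfIdeal.koszulD k (letterplace (n + 1) P) R
      (((R.card : ℤ) - (n + 1)) + 1) = 0 := by
    apply LinearMap.ext
    intro x
    have hx : x = 0 := funext fun S => (hempty.false S).elim
    rw [hx, map_zero, LinearMap.zero_apply]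
  rw [hzero, LinearMap.range_zero, finrank_bot]

end S12

/-- A multidegree `R ⊆ [n] × P` (with nonempty parts; here
`n` is rendered as `n + 1`) occurs in the first (`n`-)linear strand of the
resolution of `L(n,P)`, i.e. `β_{|R|-n,R}(L(n,P)) ≠ 0`, iff for every
`i = 1, …, n-1`, every `p ∈ Rᵢ` and `q ∈ R_{i+1}` satisfy `p ≤ q`; and in
that case `β_{|R|-n,R}(L(n,P)) = 1`. -/
theorem statement_12 {P : Type u} [PartialOrder P] [Fintype P] (k : Type w)
    [Field k] (n : ℕ) (R : Finset (Fin (n + 1) × P))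
    (hne : ∀ i, (part R i).Nonempty) :
    (multiBetti k (letterplace (n + 1) P) ((R.card : ℤ) - (n + 1)) R ≠ 0 ↔
      ∀ i : Fin n, ∀ p ∈ part R i.castSucc, ∀ q ∈ part R i.succ, p ≤ q) ∧
    ((∀ i : Fin n, ∀ p ∈ part R i.castSucc, ∀ q ∈ part R i.succ, p ≤ q) →
      multiBetti k (letterplace (n + 1) P) ((R.card : ℤ) - (n + 1)) R = 1) := by
  have hzero : ¬ (∀ i : Fin n, ∀ p ∈ part R i.castSucc, ∀ q ∈ part R i.succ, p ≤ q) →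
      multiBetti k (letterplace (n + 1) P) ((R.card : ℤ) - (n + 1)) R = 0 := by
    intro hbad
    unfold multiBetti
    rw [S12.ker_bot R hbad, finrank_bot, S12.range_finrank_zero k R]
  have hone : (∀ i : Fin n, ∀ p ∈ part R i.castSucc, ∀ q ∈ part R i.succ, p ≤ q) →
      multiBetti k (letterplace (n + 1) P) ((R.card : ℤ) - (n + 1)) R = 1 := by
    intro hgood
    unfold multiBetti
    rw [S12.ker_span k R hne hgood, finrank_span_singleton (S12.eps_ne k R hne hgood),
      S12.range_finrank_zero k R]
  refine ⟨⟨fun hb => ?_, fun hgood => by rw [hone hgood]; exact one_ne_zero⟩, hone⟩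
  by_contra hbad
  exact hb (hzero hbad)

end
end

section
/- Let R_1 ≤ R_2 ≤ ··· ≤ R_n be nonempty subsets of a finite poset P (with respect to the order ≤ on subsets). Then |R_1| + |R_2| + ··· + |R_n| = |R_1 ∪ R_2 ∪ ··· ∪ R_n| + Σ_{i=1}^{n−1} |R_i ∩ R_{i+1}|. -/
/-!
Common infrastructure: abstract simplicial complexes, geometric realization,
homotopy equivalence, reduced simplicial cohomology, squarefree monomial ideals
(encoded as upward closed families of finite sets), Koszul-complex multigraded
Betti numbers, and letterplace ideals of posets.
-/

noncomputable section

open Finset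

attribute [local instance] Classical.propDecidable

universe u v w

/-- `A` is a maximal antichain of the poset `P`. -/
def IsMaxAntichain' {P : Type u} [PartialOrder P] (A : Finset P) : Prop :=
  IsAntichain (· ≤ ·) (A : Set P) ∧
    ∀ B : Finset P, IsAntichain (· ≤ ·) (B : Set P) → A ⊆ B → A = B

section Aux
variable {P : Type u} [PartialOrder P]

lemma mem_maxSet_of_maximal {A : Finset P} {a : P} (h : Maximal (· ∈ A) a) :
    a ∈ maxSet A := by
  simp only [maxSet, mem_filter]
  exact ⟨h.1, fun b hb hab => le_antisymm hab (h.2 hb hab)⟩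

lemma exists_le_maxSet {A : Finset P} {x : P} (hx : x ∈ A) :
    ∃ m ∈ maxSet A, x ≤ m := by
  obtain ⟨b, hxb, hb⟩ := A.exists_le_maximal hx
  exact ⟨b, mem_maxSet_of_maximal hb, hxb⟩

lemma step_up {A B : Finset P} (h : subsetLE A B) {x : P} (hx : x ∈ A) :
    ∃ y ∈ B, x ≤ y := by
  obtain ⟨m, hm, hxm⟩ := exists_le_maxSet hx
  obtain ⟨b, hb, hmb⟩ := h.1 m hm
  exact ⟨b, (mem_filter.mp hb).1, hxm.trans hmb⟩

lemma chain_up {n : ℕ} {g : ℕ → Finset P}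
    (hg : ∀ m, m + 1 ≤ n → subsetLE (g m) (g (m + 1))) {x : P} {i j : ℕ}
    (hij : i ≤ j) (hjn : j ≤ n) (hx : x ∈ g i) : ∃ y ∈ g j, x ≤ y := by
  induction j with
  | zero => exact ⟨x, by simpa [Nat.le_zero.mp hij] using hx, le_rfl⟩
  | succ j ih =>
    rcases Nat.lt_or_ge i (j + 1) with hlt | hge
    · obtain ⟨y, hy, hxy⟩ := ih (Nat.lt_succ_iff.mp hlt) (Nat.le_of_succ_le hjn)
      obtain ⟨z, hz, hyz⟩ := step_up (hg j hjn) hy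
      exact ⟨z, hz, hxy.trans hyz⟩
    · have : i = j + 1 := le_antisymm hij hge
      exact ⟨x, this ▸ hx, le_rfl⟩

lemma key_interval {n : ℕ} {g : ℕ → Finset P}
    (hg : ∀ m, m + 1 ≤ n → subsetLE (g m) (g (m + 1))) {x : P} {i j : ℕ}
    (hij : i < j) (hjn : j ≤ n) (hxi : x ∈ g i) (hxj : x ∈ g j) :
    x ∈ g (j - 1) := by
  obtain ⟨j, rfl⟩ := Nat.exists_eq_add_of_lt hij  -- j = i + j + 1
  simp only [Nat.add_sub_cancel]
  obtain ⟨v, hv, hxv⟩ := chain_up hg (Nat.le_add_right i j)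
    (le_trans (by omega) hjn) hxi
  obtain ⟨m, hm, hvm⟩ := exists_le_maxSet hv
  have hstep := hg (i + j) (by omega)
  obtain ⟨w, hw, hmw⟩ := hstep.1 m hm
  have hwmin := (mem_filter.mp hw).2
  have hxw : x ≤ w := (hxv.trans hvm).trans hmw
  have hwx : w = x := hwmin x hxj hxw
  have : v = x := le_antisymm (by rw [← hwx]; exact hvm.trans hmw) hxv
  rwa [← this]

end Aux

/-- Let `R₁ ≤ R₂ ≤ ⋯ ≤ Rₙ` be nonempty subsets of a finite
poset `P` (for the order `≤` on subsets; here `n` is rendered as `n + 1`).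
Then `|R₁| + ⋯ + |Rₙ| = |R₁ ∪ ⋯ ∪ Rₙ| + ∑_{i=1}^{n-1} |Rᵢ ∩ R_{i+1}|`. -/
theorem statement_15 {P : Type u} [PartialOrder P] [Fintype P] (n : ℕ)
    (Rf : Fin (n + 1) → Finset P) (hne : ∀ i, (Rf i).Nonempty)
    (hle : ∀ i : Fin n, subsetLE (Rf i.castSucc) (Rf i.succ)) :
    ∑ i, (Rf i).card =
      (Finset.univ.biUnion Rf).card +
        ∑ i : Fin n, (Rf i.castSucc ∩ Rf i.succ).card := by
  induction n with
  | zero =>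
    have hU0 : Finset.univ.biUnion Rf = Rf 0 := by
      ext x
      simp only [mem_biUnion, mem_univ, true_and]
      refine ⟨fun ⟨i, hi⟩ => ?_, fun h => ⟨0, h⟩⟩
      have : i = 0 := Fin.ext (by omega)
      rwa [this] at hi
    simp [hU0]
  | succ n ih =>
    set Rf' : Fin (n + 1) → Finset P := fun i => Rf i.castSucc with hRf'
    have hle' : ∀ i : Fin n, subsetLE (Rf' i.castSucc) (Rf' i.succ) := by
      intro i
      have := hle i.castSucc
      rwa [Fin.succ_castSucc] at this
    have ihh := ih Rf' (fun i => hne i.castSucc) hle'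
    -- the auxiliary ℕ-indexed chain
    set g : ℕ → Finset P := fun m => Rf ⟨min m (n + 1), by omega⟩ with hgdef
    have hg : ∀ m, m + 1 ≤ n + 1 → subsetLE (g m) (g (m + 1)) := by
      intro m hm
      have h1 : g m = Rf (Fin.castSucc ⟨m, by omega⟩) := by
        simp only [hgdef]
        congr 1
        ext
        simp [Fin.castSucc, Nat.min_eq_left (by omega : m ≤ n + 1)]
      have h2 : g (m + 1) = Rf (Fin.succ ⟨m, by omega⟩) := by
        simp only [hgdef]
        congr 1
        ext
        simp [Fin.succ, Nat.min_eq_left (by omega : m + 1 ≤ n + 1)]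
      rw [h1, h2]
      exact hle _
    -- union splits
    have hU : Finset.univ.biUnion Rf =
        (Finset.univ.biUnion Rf') ∪ Rf (Fin.last (n + 1)) := by
      ext x
      simp only [mem_biUnion, mem_union, mem_univ, true_and]
      constructor
      · rintro ⟨i, hi⟩
        rcases Fin.lastCases (motive := fun j => x ∈ Rf j →
            (∃ k : Fin (n+1), x ∈ Rf' k) ∨ x ∈ Rf (Fin.last (n+1)))
          (fun h => Or.inr h) (fun k h => Or.inl ⟨k, h⟩) i hi with h | h
        · exact Or.inl h
        · exact Or.inr h
      · rintro (⟨k, hk⟩ | h)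
        · exact ⟨k.castSucc, hk⟩
        · exact ⟨Fin.last (n + 1), h⟩
    -- intersection with last equals intersection of last two
    have hI : (Finset.univ.biUnion Rf') ∩ Rf (Fin.last (n + 1)) =
        Rf ((Fin.last n).castSucc) ∩ Rf (Fin.last (n + 1)) := by
      ext x
      simp only [mem_inter, mem_biUnion, mem_univ, true_and]
      constructor
      · rintro ⟨⟨i, hi⟩, hlast⟩
        refine ⟨?_, hlast⟩
        have hxi : x ∈ g i.val := by
          simp only [hgdef]
          convert hi using 2
          ext
          simp [Nat.min_eq_left (by omega : i.val ≤ n + 1), hRf']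
        have hxj : x ∈ g (n + 1) := by
          simp only [hgdef]
          convert hlast using 2
          ext
          simp [Fin.last]
        have hk := key_interval hg (by omega : i.val < n + 1) le_rfl hxi hxj
        simp only [Nat.add_sub_cancel, hgdef] at hk
        convert hk using 2
        ext
        simp [Fin.castSucc, Fin.last]
      · rintro ⟨h1, h2⟩
        exact ⟨⟨Fin.last n, h1⟩, h2⟩
    have hcard := Finset.card_union_add_card_inter
      (Finset.univ.biUnion Rf') (Rf (Fin.last (n + 1)))
    rw [hI] at hcard
    rw [Fin.sum_univ_castSucc (f := fun i => (Rf i).card),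
      Fin.sum_univ_castSucc (f := fun i : Fin (n+1) => (Rf i.castSucc ∩ Rf i.succ).card),
      hU]
    have hsucclast : (Fin.last n).succ = Fin.last (n + 1) := rfl
    have : ∑ i : Fin n, (Rf' i.castSucc ∩ Rf' i.succ).card
        = ∑ i : Fin n, (Rf (i.castSucc).castSucc ∩ Rf (i.castSucc).succ).card := by
      apply Finset.sum_congr rfl
      intro i _
      rw [hRf']
      simp only [Fin.succ_castSucc]
    rw [this] at ihh
    simp only [hRf', Fin.succ_castSucc] at ihh hcard ⊢
    rw [hsucclast]
    omega

end
end
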